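/- Let 1 < q < ∞, v ∈ ℝⁿ and 0 < λ < ‖v‖_{q̄}. Then x* ∈ ℝⁿ is the minimizer of g(x) = (1/2)‖x − v‖₂² + λ‖x‖_q if and only if x* ≠ 0 and x* + λ‖x*‖_q^{1−q} x*^{(q−1)} = v, where x^{(q−1)} is defined componentwise by (x^{(q−1)})ᵢ = sgn(xᵢ)|xᵢ|^{q−1}. -/

import Mathlib

open scoped BigOperators

/-- The vector ℓq norm for a real exponent `q`. -/
noncomputable def lqNormR {n : ℕ} (q : ℝ) (x : Fin n → ℝ) : ℝ :=
  (∑ i, |x i| ^ q) ^ (1 / q)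

/-- The objective `g(x) = (1/2)‖x − v‖₂² + λ‖x‖_q`. -/
noncomputable def gObjR {n : ℕ} (q : ℝ) (lam : ℝ) (v x : Fin n → ℝ) : ℝ :=
  (1 / 2) * ∑ i, (x i - v i) ^ 2 + lam * lqNormR q x

lemma sgn_abs_mul (q : ℝ) (hq : 1 < q) (t : ℝ) :
    Real.sign t * |t| ^ (q - 1) * t = |t| ^ q := by
  rcases lt_trichotomy t 0 with h | h | h
  · rw [Real.sign_of_neg h, abs_of_neg h,
      show q = (q - 1) + 1 by ring, Real.rpow_add_one (by linarith)]
    ring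
  · simp [h, Real.zero_rpow (by linarith : q ≠ 0)]
  · rw [Real.sign_of_pos h, abs_of_pos h,
      show q = (q - 1) + 1 by ring, Real.rpow_add_one (by linarith)]
    ring

lemma abs_sgn_abs (q : ℝ) (hq : 1 < q) (t : ℝ) :
    |Real.sign t * |t| ^ (q - 1)| = |t| ^ (q - 1) := by
  rcases lt_trichotomy t 0 with h | h | h
  · rw [Real.sign_of_neg h, abs_mul]
    simp [abs_of_nonneg (Real.rpow_nonneg (abs_nonneg t) _)]
  · simp [h, Real.zero_rpow (by linarith : q - 1 ≠ 0)]
  · rw [Real.sign_of_pos h, abs_mul]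
    simp [abs_of_nonneg (Real.rpow_nonneg (abs_nonneg t) _)]

lemma abs_rpow_mul_self (q : ℝ) (hq : 1 < q) (t : ℝ) :
    |t| ^ (q - 2) * t = Real.sign t * |t| ^ (q - 1) := by
  rcases lt_trichotomy t 0 with h | h | h
  · rw [Real.sign_of_neg h, abs_of_neg h,
      show q - 1 = (q - 2) + 1 by ring, Real.rpow_add_one (by linarith)]
    ring
  · rcases eq_or_ne q 2 with h2 | h2
    · simp [h, h2]
    · simp [h, Real.zero_rpow (sub_ne_zero.2 h2), Real.sign_zero]
  · rw [Real.sign_of_pos h, abs_of_pos h,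
      show q - 1 = (q - 2) + 1 by ring, Real.rpow_add_one (by linarith)]
    ring

lemma sum_abs_rpow_pos {n : ℕ} (q : ℝ) {x : Fin n → ℝ} (hx : x ≠ 0) :
    0 < ∑ i, |x i| ^ q := by
  obtain ⟨i, hi⟩ := Function.ne_iff.1 hx
  refine Finset.sum_pos' (fun j _ => Real.rpow_nonneg (abs_nonneg _) q) ⟨i, Finset.mem_univ i, ?_⟩
  exact Real.rpow_pos_of_pos (abs_pos.2 hi) q

lemma lqNormR_pos {n : ℕ} (q : ℝ) {x : Fin n → ℝ} (hx : x ≠ 0) : 0 < lqNormR q x :=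
  Real.rpow_pos_of_pos (sum_abs_rpow_pos q hx) _

lemma lqNormR_nonneg {n : ℕ} (q : ℝ) (x : Fin n → ℝ) : 0 ≤ lqNormR q x :=
  Real.rpow_nonneg (Finset.sum_nonneg fun i _ => Real.rpow_nonneg (abs_nonneg _) q) _

lemma lqNormR_rpow {n : ℕ} (q : ℝ) (hq : q ≠ 0) (x : Fin n → ℝ) :
    lqNormR q x ^ q = ∑ i, |x i| ^ q := by
  rw [lqNormR, ← Real.rpow_mul
    (Finset.sum_nonneg fun i _ => Real.rpow_nonneg (abs_nonneg _) q),
    one_div_mul_cancel hq, Real.rpow_one]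

lemma w_x {n : ℕ} (q : ℝ) (hq : 1 < q) (lam : ℝ) {x : Fin n → ℝ} (hx : x ≠ 0) :
    ∑ i, lam * lqNormR q x ^ (1 - q) * (Real.sign (x i) * |x i| ^ (q - 1)) * x i
      = lam * lqNormR q x := by
  have hN : 0 < lqNormR q x := lqNormR_pos q hx
  have h1 : ∀ i ∈ Finset.univ,
      lam * lqNormR q x ^ (1 - q) * (Real.sign (x i) * |x i| ^ (q - 1)) * x i
        = lam * lqNormR q x ^ (1 - q) * |x i| ^ q := fun i _ => by
    rw [← sgn_abs_mul q hq (x i)]; ring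
  rw [Finset.sum_congr rfl h1, ← Finset.mul_sum, ← lqNormR_rpow q (by linarith) x,
    mul_assoc, ← Real.rpow_add hN]
  norm_num

lemma w_holder {n : ℕ} (q : ℝ) (hq : 1 < q) (lam : ℝ) (hlam : 0 ≤ lam)
    {x : Fin n → ℝ} (hx : x ≠ 0) (y : Fin n → ℝ) :
    ∑ i, lam * lqNormR q x ^ (1 - q) * (Real.sign (x i) * |x i| ^ (q - 1)) * y i
      ≤ lam * lqNormR q y := by
  set qb : ℝ := q / (q - 1) with hqb
  have hpq : qb.HolderConjugate q := (Real.HolderConjugate.conjExponent hq).symm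
  have hN : 0 < lqNormR q x := lqNormR_pos q hx
  have hc : 0 ≤ lam * lqNormR q x ^ (1 - q) :=
    mul_nonneg hlam (Real.rpow_nonneg hN.le _)
  set w : Fin n → ℝ :=
    fun i => lam * lqNormR q x ^ (1 - q) * (Real.sign (x i) * |x i| ^ (q - 1)) with hw
  have habs : ∀ i, |w i| ^ qb = (lam * lqNormR q x ^ (1 - q)) ^ qb * |x i| ^ q := by
    intro i
    rw [hw, abs_mul, abs_of_nonneg hc, abs_sgn_abs q hq,
      Real.mul_rpow hc (Real.rpow_nonneg (abs_nonneg _) _),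
      ← Real.rpow_mul (abs_nonneg _),
      show (q - 1) * qb = q by rw [hqb]; rw [mul_div_cancel₀ _ (by linarith : q - 1 ≠ 0)]]
  have hsum : ∑ i, |w i| ^ qb = (lam * lqNormR q x ^ (1 - q)) ^ qb * ∑ i, |x i| ^ q := by
    rw [Finset.sum_congr rfl fun i _ => habs i, ← Finset.mul_sum]
  have key : (∑ i, |w i| ^ qb) ^ (1 / qb) = lam := by
    rw [hsum, ← lqNormR_rpow q (by linarith) x,
      Real.mul_rpow (Real.rpow_nonneg hc _) (Real.rpow_nonneg hN.le _),
      ← Real.rpow_mul hc, ← Real.rpow_mul hN.le,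
      mul_one_div_cancel hpq.ne_zero, Real.rpow_one,
      show q * (1 / qb) = q - 1 by rw [hqb, one_div_div]; rw [mul_div_cancel₀ _ (by linarith : q ≠ 0)],
      mul_assoc, ← Real.rpow_add hN]
    norm_num
  calc ∑ i, w i * y i
      ≤ (∑ i, |w i| ^ qb) ^ (1 / qb) * (∑ i, |y i| ^ q) ^ (1 / q) :=
        Real.inner_le_Lp_mul_Lq Finset.univ w y hpq
    _ = lam * lqNormR q y := by rw [key, lqNormR]

/-- Sufficiency: if the stationarity equation holds at a nonzero point, it is a global min. -/
lemma suff {n : ℕ} (q : ℝ) (hq : 1 < q) (v : Fin n → ℝ) (lam : ℝ) (hlam : 0 < lam)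
    {x : Fin n → ℝ} (hx : x ≠ 0)
    (heq : ∀ i, x i + lam * lqNormR q x ^ (1 - q) * (Real.sign (x i) * |x i| ^ (q - 1)) = v i)
    (y : Fin n → ℝ) : gObjR q lam v x ≤ gObjR q lam v y := by
  set w : Fin n → ℝ :=
    fun i => lam * lqNormR q x ^ (1 - q) * (Real.sign (x i) * |x i| ^ (q - 1)) with hw
  have expand : ∑ i, (y i - v i) ^ 2 =
      ((∑ i, (y i - x i) ^ 2) - 2 * ∑ i, w i * y i) + 2 * (∑ i, w i * x i)
        + ∑ i, (x i - v i) ^ 2 := by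
    rw [Finset.mul_sum, Finset.mul_sum, ← Finset.sum_sub_distrib, ← Finset.sum_add_distrib,
      ← Finset.sum_add_distrib]
    refine Finset.sum_congr rfl fun i _ => ?_
    rw [← heq i]; simp only [hw]; ring
  have hwy : ∑ i, w i * y i ≤ lam * lqNormR q y := w_holder q hq lam hlam.le hx y
  have hwx : ∑ i, w i * x i = lam * lqNormR q x := w_x q hq lam hx
  have hsq : (0:ℝ) ≤ ∑ i, (y i - x i) ^ 2 :=
    Finset.sum_nonneg fun i _ => sq_nonneg _
  rw [gObjR, gObjR, expand, hwx]
  linarith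

/-- Let `1 < q < ∞`, `v ∈ ℝⁿ` and `0 < λ < ‖v‖_{q̄}` where `q̄ = q/(q−1)`.
Then `x*` is the minimizer of `g(x) = (1/2)‖x − v‖₂² + λ‖x‖_q` iff `x* ≠ 0` and
`x* + λ‖x*‖_q^{1−q} x*^{(q−1)} = v`, where `(x^{(q−1)})ᵢ = sgn(xᵢ)|xᵢ|^{q−1}`. -/
theorem stmt2 {n : ℕ} (q : ℝ) (hq : 1 < q) (v : Fin n → ℝ) (lam : ℝ)
    (hlam : 0 < lam) (hlam' : lam < lqNormR (q / (q - 1)) v) (x : Fin n → ℝ) :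
    (∀ y : Fin n → ℝ, gObjR q lam v x ≤ gObjR q lam v y) ↔
      (x ≠ 0 ∧ ∀ i, x i + lam * lqNormR q x ^ (1 - q) *
        (Real.sign (x i) * |x i| ^ (q - 1)) = v i) := by
  constructor
  · intro hmin
    -- First: x ≠ 0
    have hq0 : q ≠ 0 := by linarith
    set qb : ℝ := q / (q - 1) with hqb
    have hqb1 : 1 < qb := (Real.HolderConjugate.conjExponent hq).symm.lt
    have hqq : (qb - 1) * q = qb := by
      rw [hqb, div_sub_one (by linarith : q - 1 ≠ 0), sub_sub_cancel, one_div,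
        inv_mul_eq_div]
    have hq2 : qb * (1 / q) = qb - 1 := by
      nth_rewrite 1 [← hqq]
      rw [mul_assoc, mul_one_div_cancel (by linarith : q ≠ 0), mul_one]
    have hx : x ≠ 0 := by
      intro hx0
      subst hx0
      -- v ≠ 0
      have hv : v ≠ 0 := by
        intro hv0
        rw [hv0] at hlam'
        have hqbne : qb ≠ 0 := by linarith
        have : lqNormR qb (0 : Fin n → ℝ) = 0 := by
          simp [lqNormR, Real.zero_rpow hqbne, Real.zero_rpow (one_div_ne_zero hqbne),
            Real.zero_rpow (inv_ne_zero hqbne)]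
        rw [this] at hlam'; linarith
      set Tv : ℝ := ∑ i, |v i| ^ qb with hTvdef
      have hTv : 0 < Tv := sum_abs_rpow_pos qb hv
      set u : Fin n → ℝ := fun i => Real.sign (v i) * |v i| ^ (qb - 1) with hu
      have hA : ∑ i, u i * v i = Tv :=
        Finset.sum_congr rfl fun i _ => sgn_abs_mul qb hqb1 (v i)
      have hU : ∑ i, |u i| ^ q = Tv := by
        refine Finset.sum_congr rfl fun i _ => ?_
        rw [hu, abs_sgn_abs qb hqb1, ← Real.rpow_mul (abs_nonneg _),
          hqq]
      set B : ℝ := ∑ i, u i ^ 2 with hB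
      have hBpos : 0 < B := by
        obtain ⟨i, hi⟩ := Function.ne_iff.1 hv
        refine Finset.sum_pos' (fun j _ => sq_nonneg _) ⟨i, Finset.mem_univ i, ?_⟩
        have : u i ≠ 0 := by
          rw [hu]
          exact mul_ne_zero (fun h => hi (Real.sign_eq_zero_iff.1 h))
            (Real.rpow_pos_of_pos (abs_pos.2 hi) _).ne'
        positivity
      -- M and the positivity of c
      have hM : lqNormR qb v = Tv ^ (1 / qb) := rfl
      have hMpos : 0 < lqNormR qb v := lt_trans hlam hlam'
      have hTvq : Tv ^ (1 / q) = lqNormR qb v ^ (qb - 1) := by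
        rw [hTvdef, ← lqNormR_rpow qb (by linarith) v, ← Real.rpow_mul (lqNormR_nonneg qb v),
          hq2]
      have hc : 0 < Tv - lam * Tv ^ (1 / q) := by
        have h1 : lqNormR qb v ^ (qb - 1) * lqNormR qb v = Tv := by
          rw [← Real.rpow_add_one hMpos.ne', sub_add_cancel,
            lqNormR_rpow qb (by linarith) v, hTvdef]
        rw [hTvq, ← h1]
        have := Real.rpow_pos_of_pos hMpos (qb - 1)
        nlinarith
      set c : ℝ := Tv - lam * Tv ^ (1 / q) with hcdef
      set t : ℝ := c / B with ht
      have htpos : 0 < t := div_pos hc hBpos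
      have htB : t * B = c := div_mul_cancel₀ _ hBpos.ne'
      -- evaluate the objective at y = t • u
      have hnorm : lqNormR q (fun i => t * u i) = t * Tv ^ (1 / q) := by
        rw [lqNormR]
        have : ∀ i ∈ Finset.univ, |t * u i| ^ q = t ^ q * |u i| ^ q := fun i _ => by
          rw [abs_mul, Real.mul_rpow (abs_nonneg t) (abs_nonneg _), abs_of_pos htpos]
        rw [Finset.sum_congr rfl this, ← Finset.mul_sum, hU,
          Real.mul_rpow (Real.rpow_nonneg htpos.le _) hTv.le,
          ← Real.rpow_mul htpos.le, mul_one_div_cancel hq0, Real.rpow_one]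
      have hzero : lqNormR q (0 : Fin n → ℝ) = 0 := by
        simp [lqNormR, Real.zero_rpow hq0, Real.zero_rpow (one_div_ne_zero hq0),
          Real.zero_rpow (inv_ne_zero hq0)]
      have hexp : ∑ i, (t * u i - v i) ^ 2 = t ^ 2 * B - 2 * t * Tv + ∑ i, (v i) ^ 2 := by
        rw [← hA, hB, Finset.mul_sum, Finset.mul_sum, ← Finset.sum_sub_distrib,
          ← Finset.sum_add_distrib]
        refine Finset.sum_congr rfl fun i _ => ?_
        ring
      have := hmin (fun i => t * u i)
      rw [gObjR, gObjR, hzero, hnorm, hexp] at this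
      simp only [Pi.zero_apply, zero_sub, neg_sq] at this
      clear_value Tv u B c t
      have ht2 : t ^ 2 * B = t * c := by rw [pow_two, mul_assoc, htB]
      have htc : t * Tv - t * (lam * Tv ^ (1 / q)) = t * c := by rw [hcdef]; ring
      nlinarith [mul_pos htpos hc]
    refine ⟨hx, fun i => ?_⟩
    -- stationarity via one-variable calculus
    classical
    set S : ℝ := ∑ j ∈ Finset.univ \ {i}, |x j| ^ q with hS
    set Q : ℝ := ∑ j ∈ Finset.univ \ {i}, (x j - v j) ^ 2 with hQ
    set T : ℝ := |x i| ^ q + S with hTdef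
    have hTsum : ∑ j, |x j| ^ q = T := by
      rw [hTdef, hS, Finset.sdiff_singleton_eq_erase]
      exact (Finset.add_sum_erase _ _ (Finset.mem_univ i)).symm
    have hT : 0 < T := hTsum ▸ sum_abs_rpow_pos q hx
    set φ : ℝ → ℝ := fun t => (1 / 2) * ((t - v i) ^ 2 + Q) + lam * (|t| ^ q + S) ^ (1 / q)
      with hφdef
    have hφ : ∀ t, gObjR q lam v (Function.update x i t) = φ t := by
      intro t
      have e1 : (fun j => (Function.update x i t j - v j) ^ 2)
          = Function.update (fun j => (x j - v j) ^ 2) i ((t - v i) ^ 2) := by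
        funext j
        by_cases h : j = i <;> simp [Function.update_apply, h]
      have e2 : (fun j => |Function.update x i t j| ^ q)
          = Function.update (fun j => |x j| ^ q) i (|t| ^ q) := by
        funext j
        by_cases h : j = i <;> simp [Function.update_apply, h]
      rw [gObjR, lqNormR]
      simp only [hφdef]
      rw [show ∑ j, (Function.update x i t j - v j) ^ 2
          = ∑ j, Function.update (fun j => (x j - v j) ^ 2) i ((t - v i) ^ 2) j by
            rw [e1],
        show ∑ j, |Function.update x i t j| ^ q
          = ∑ j, Function.update (fun j => |x j| ^ q) i (|t| ^ q) j by rw [e2],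
        Finset.sum_update_of_mem (Finset.mem_univ i),
        Finset.sum_update_of_mem (Finset.mem_univ i)]
    have hlocal : IsLocalMin φ (x i) := by
      refine Filter.Eventually.of_forall fun t => ?_
      have h1 := hφ (x i)
      rw [Function.update_eq_self] at h1
      rw [← h1, ← hφ t]
      exact hmin _
    have hd1 : HasDerivAt (fun t : ℝ => (1 / 2) * ((t - v i) ^ 2 + Q)) (x i - v i) (x i) := by
      have := ((((hasDerivAt_id (x i)).sub_const (v i)).pow 2).add_const Q).const_mul (1/2 : ℝ)
      refine this.congr_deriv ?_
      simp
    have hd2 : HasDerivAt (fun t : ℝ => lam * (|t| ^ q + S) ^ (1 / q))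
        (lam * ((1 / q * T ^ (1 / q - 1)) * (q * |x i| ^ (q - 2) * x i))) (x i) := by
      have hinner : HasDerivAt (fun t : ℝ => |t| ^ q + S) (q * |x i| ^ (q - 2) * x i) (x i) :=
        (hasDerivAt_abs_rpow (x i) hq).add_const S
      have houter : HasDerivAt (fun z : ℝ => z ^ (1 / q)) (1 / q * T ^ (1 / q - 1)) T :=
        Real.hasDerivAt_rpow_const (Or.inl hT.ne')
      have := HasDerivAt.comp (x i) (by rwa [show |x i| ^ q + S = T from rfl]) hinner
      exact this.const_mul lam
    have hderiv : HasDerivAt φ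
        ((x i - v i) + lam * ((1 / q * T ^ (1 / q - 1)) * (q * |x i| ^ (q - 2) * x i)))
        (x i) := hd1.add hd2
    have hzero := hlocal.hasDerivAt_eq_zero hderiv
    -- convert the derivative into the claimed form
    have hN1q : lqNormR q x ^ (1 - q) = T ^ (1 / q - 1) := by
      rw [lqNormR, hTsum, ← Real.rpow_mul hT.le,
        show 1 / q * (1 - q) = 1 / q - 1 by
          rw [mul_one_sub, one_div_mul_cancel hq0]]
    have hkey : lam * ((1 / q * T ^ (1 / q - 1)) * (q * |x i| ^ (q - 2) * x i))
        = lam * lqNormR q x ^ (1 - q) * (Real.sign (x i) * |x i| ^ (q - 1)) := by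
      rw [hN1q, ← abs_rpow_mul_self q hq (x i)]
      field_simp
    rw [hkey] at hzero
    linarith
  · rintro ⟨hx, heq⟩
    exact suff q hq v lam hlam hx heq
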